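/- Let 0 < a < 1 and let ξ ∈ ℂ be such that ξ ≠ exp(2πis) for every s ∈ [0,a]. Then the total variation of the argument of exp(2πit) − ξ as t runs from 0 to a, namely ind = Im ∫₀^a (2πi·exp(2πit))/(exp(2πit) − ξ) dt, satisfies ind ≥ π(a − 1). -/

import Mathlib

open Complex intervalIntegral MeasureTheory

noncomputable def myf (ξ : ℂ) (t : ℝ) : ℂ :=
  (2 * Real.pi * Complex.I * Complex.exp (2 * Real.pi * Complex.I * (t : ℂ))) /
    (Complex.exp (2 * Real.pi * Complex.I * (t : ℂ)) - ξ)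

lemma im_formula_gen (ξ w : ℂ) (hw1 : Complex.normSq w = 1) (h : w ≠ ξ) :
    ((2 * Real.pi * Complex.I * w) / (w - ξ)).im
      = Real.pi + Real.pi * (1 - Complex.normSq ξ) / Complex.normSq (w - ξ) := by
  have hd : 0 < Complex.normSq (w - ξ) := Complex.normSq_pos.2 (sub_ne_zero.2 h)
  rw [Complex.div_im]
  have hw1' : w.re * w.re + w.im * w.im = 1 := hw1
  have hdexp : Complex.normSq (w - ξ) = (w.re - ξ.re) * (w.re - ξ.re) + (w.im - ξ.im) * (w.im - ξ.im) := by
    simp [Complex.normSq_apply]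
  have hξ' : Complex.normSq ξ = ξ.re * ξ.re + ξ.im * ξ.im := rfl
  have hd0 : (w.re - ξ.re) * (w.re - ξ.re) + (w.im - ξ.im) * (w.im - ξ.im) ≠ 0 := by
    rw [← hdexp]; exact ne_of_gt hd
  rw [hdexp, hξ']
  simp only [Complex.mul_re, Complex.mul_im, Complex.sub_re, Complex.sub_im,
    Complex.I_re, Complex.I_im, Complex.ofReal_re, Complex.ofReal_im, Complex.re_ofNat, Complex.im_ofNat]
  field_simp [hd0]
  have hw2 : w.re^2 + w.im^2 = 1 := by nlinarith [hw1']
  have key := mul_inv_cancel₀ hd0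
  linear_combination (Real.pi * ((w.re - ξ.re) * (w.re - ξ.re) + (w.im - ξ.im) * (w.im - ξ.im))⁻¹) * hw2 + Real.pi * key

lemma normSq_exp (t : ℝ) : Complex.normSq (Complex.exp (2 * Real.pi * Complex.I * (t : ℂ))) = 1 := by
  rw [Complex.normSq_eq_norm_sq, Complex.norm_exp]
  simp [Complex.mul_re, Complex.mul_im]

lemma abs_exp_one (t : ℝ) : ‖Complex.exp (2 * Real.pi * Complex.I * (t : ℂ))‖ = 1 := by
  have h := normSq_exp t
  nlinarith [Complex.sq_norm (Complex.exp (2 * Real.pi * Complex.I * (t : ℂ))),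
    norm_nonneg (Complex.exp (2 * Real.pi * Complex.I * (t : ℂ)))]

lemma cont_exp : Continuous fun t : ℝ => Complex.exp (2 * Real.pi * Complex.I * (t : ℂ)) := by
  exact Complex.continuous_exp.comp (by continuity)

lemma myf_im (ξ : ℂ) (t : ℝ) (h : Complex.exp (2 * Real.pi * Complex.I * (t : ℂ)) ≠ ξ) :
    (myf ξ t).im = Real.pi + Real.pi * (1 - Complex.normSq ξ) /
      Complex.normSq (Complex.exp (2 * Real.pi * Complex.I * (t : ℂ)) - ξ) :=
  im_formula_gen ξ _ (normSq_exp t) h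

lemma myf_hasDeriv (ξ : ℂ) (hξ : 1 < ‖ξ‖) (t : ℝ) :
    HasDerivAt (fun t : ℝ => Complex.log (1 - Complex.exp (2 * Real.pi * Complex.I * (t : ℂ)) / ξ))
      (myf ξ t) t := by
  have hξ0 : ξ ≠ 0 := by
    intro h; rw [h] at hξ; simp at hξ; linarith
  have hne : Complex.exp (2 * Real.pi * Complex.I * (t : ℂ)) - ξ ≠ 0 := by
    rw [sub_ne_zero]
    intro h
    rw [← h] at hξ
    rw [abs_exp_one t] at hξ
    linarith
  have he : HasDerivAt (fun t : ℝ => Complex.exp (2 * Real.pi * Complex.I * (t : ℂ)))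
      (2 * Real.pi * Complex.I * Complex.exp (2 * Real.pi * Complex.I * (t : ℂ))) t := by
    have h0 : HasDerivAt (fun z : ℂ => 2 * Real.pi * Complex.I * z)
        (2 * Real.pi * Complex.I) ((t : ℝ) : ℂ) := by
      simpa using (hasDerivAt_id ((t : ℝ) : ℂ)).const_mul (2 * Real.pi * Complex.I : ℂ)
    have := h0.cexp.comp_ofReal
    simpa [mul_comm] using this
  have hg : HasDerivAt (fun t : ℝ => 1 - Complex.exp (2 * Real.pi * Complex.I * (t : ℂ)) / ξ)
      (-(2 * Real.pi * Complex.I * Complex.exp (2 * Real.pi * Complex.I * (t : ℂ)) / ξ)) t :=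
    ((he.div_const ξ).const_sub 1)
  have hslit : (1 - Complex.exp (2 * Real.pi * Complex.I * (t : ℂ)) / ξ) ∈ Complex.slitPlane := by
    left
    have h1 : ‖Complex.exp (2 * Real.pi * Complex.I * (t : ℂ)) / ξ‖ = 1 / ‖ξ‖ := by
      rw [norm_div, abs_exp_one]
    have h2 : (Complex.exp (2 * Real.pi * Complex.I * (t : ℂ)) / ξ).re
        ≤ ‖Complex.exp (2 * Real.pi * Complex.I * (t : ℂ)) / ξ‖ :=
      Complex.re_le_norm _
    have h3 : (1 : ℝ) / ‖ξ‖ < 1 := by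
      rw [div_lt_one (by linarith)]; exact hξ
    simp only [Complex.sub_re, Complex.one_re]
    linarith
  have hne' : ξ - Complex.exp (2 * Real.pi * Complex.I * (t : ℂ)) ≠ 0 := by
    intro h; apply hne; rw [sub_eq_zero] at h ⊢; exact h.symm
  have := hg.clog_real hslit
  convert this using 1
  rw [myf]
  field_simp
  ring

/-- Index bound (4) in the proof of Theorem 3 (Kozma–Oravecz): if `ξ` avoids the arc
`{e^{2πis} : s ∈ [0,a]}`, then the change of argument of `e^{2πit} - ξ` as `t` runs
from `0` to `a` is at least `π(a-1)`. -/
theorem index_single_root_lower_bound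
    (a : ℝ) (ha0 : 0 < a) (ha1 : a < 1) (ξ : ℂ)
    (hξ : ∀ s ∈ Set.Icc (0 : ℝ) a, ξ ≠ Complex.exp (2 * Real.pi * Complex.I * (s : ℂ))) :
    Real.pi * (a - 1) ≤
      (∫ t in (0 : ℝ)..a,
        (2 * Real.pi * Complex.I * Complex.exp (2 * Real.pi * Complex.I * (t : ℂ))) /
          (Complex.exp (2 * Real.pi * Complex.I * (t : ℂ)) - ξ)).im := by
  have hπ := Real.pi_pos
  show Real.pi * (a - 1) ≤ (∫ t in (0 : ℝ)..a, myf ξ t).im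
  rcases le_or_gt (Complex.normSq ξ) 1 with hle | hgt
  · -- |ξ| ≤ 1 : the integrand has nonnegative imaginary part on [0,a]
    have hfcont : ContinuousOn (myf ξ) (Set.Icc 0 a) := by
      apply ContinuousOn.div
      · exact (continuous_const.mul cont_exp).continuousOn
      · exact (cont_exp.sub continuous_const).continuousOn
      · intro t ht
        exact sub_ne_zero.2 (hξ t ht).symm
    have hint : IntervalIntegrable (myf ξ) volume 0 a := by
      have h' : ContinuousOn (myf ξ) (Set.uIcc 0 a) := by rwa [Set.uIcc_of_le ha0.le]
      exact h'.intervalIntegrable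
    have him : ∫ t in (0:ℝ)..a, (myf ξ t).im = (∫ t in (0:ℝ)..a, myf ξ t).im := by
      simpa using Complex.imCLM.intervalIntegral_comp_comm hint
    rw [← him]
    have h0 : (0:ℝ) ≤ ∫ t in (0:ℝ)..a, (myf ξ t).im := by
      apply intervalIntegral.integral_nonneg ha0.le
      intro u hu
      rw [myf_im ξ u (hξ u hu).symm]
      have hd : (0:ℝ) ≤ Complex.normSq (Complex.exp (2 * Real.pi * Complex.I * (u : ℂ)) - ξ) :=
        Complex.normSq_nonneg _
      have : (0:ℝ) ≤ Real.pi * (1 - Complex.normSq ξ) /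
          Complex.normSq (Complex.exp (2 * Real.pi * Complex.I * (u : ℂ)) - ξ) :=
        div_nonneg (mul_nonneg hπ.le (by linarith)) hd
      linarith
    nlinarith
  · -- |ξ| > 1
    have hξabs : 1 < ‖ξ‖ := by
      nlinarith [Complex.sq_norm ξ, norm_nonneg ξ]
    have hne : ∀ t : ℝ, Complex.exp (2 * Real.pi * Complex.I * (t : ℂ)) ≠ ξ := by
      intro t h
      have h1 := abs_exp_one t
      rw [h] at h1
      linarith
    have hfcont : Continuous (myf ξ) := by
      apply Continuous.div
      · exact continuous_const.mul cont_exp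
      · exact cont_exp.sub continuous_const
      · intro t; exact sub_ne_zero.2 (hne t)
    have hintf : ∀ b c : ℝ, IntervalIntegrable (myf ξ) volume b c := fun b c =>
      hfcont.intervalIntegrable b c
    have hintim : ∀ b c : ℝ, IntervalIntegrable (fun t => (myf ξ t).im) volume b c := fun b c =>
      (Complex.continuous_im.comp hfcont).intervalIntegrable b c
    -- full-period integral is zero
    have hI1 : (∫ t in (0:ℝ)..1, myf ξ t) = 0 := by
      rw [intervalIntegral.integral_eq_sub_of_hasDerivAt
        (fun t _ => myf_hasDeriv ξ hξabs t) (hintf 0 1)]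
      have e1 : Complex.exp (2 * Real.pi * Complex.I * ((1:ℝ):ℂ)) = 1 := by
        push_cast
        rw [mul_one]
        exact Complex.exp_two_pi_mul_I
      have e0 : Complex.exp (2 * Real.pi * Complex.I * ((0:ℝ):ℂ)) = 1 := by
        push_cast
        simp
      rw [e1, e0]
      exact sub_self _
    have him1 : (∫ t in (0:ℝ)..1, (myf ξ t).im) = 0 := by
      have := Complex.imCLM.intervalIntegral_comp_comm (hintf 0 1)
      simp only [Complex.imCLM_apply] at this
      rw [this, hI1]
      simp
    -- g t = π - im (f t) is nonnegative
    have hg0 : ∀ t : ℝ, (myf ξ t).im ≤ Real.pi := by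
      intro t
      rw [myf_im ξ t (hne t)]
      have hd : (0:ℝ) < Complex.normSq (Complex.exp (2 * Real.pi * Complex.I * (t : ℂ)) - ξ) :=
        Complex.normSq_pos.2 (sub_ne_zero.2 (hne t))
      have : Real.pi * (1 - Complex.normSq ξ) /
          Complex.normSq (Complex.exp (2 * Real.pi * Complex.I * (t : ℂ)) - ξ) ≤ 0 :=
        div_nonpos_of_nonpos_of_nonneg (mul_nonpos_of_nonneg_of_nonpos hπ.le (by linarith)) hd.le
      linarith
    have hintg : ∀ b c : ℝ, IntervalIntegrable (fun t => Real.pi - (myf ξ t).im) volume b c :=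
      fun b c => (intervalIntegrable_const.sub (hintim b c))
    have hg1 : (∫ t in (0:ℝ)..1, (Real.pi - (myf ξ t).im)) = Real.pi := by
      rw [intervalIntegral.integral_sub intervalIntegrable_const (hintim 0 1), him1]
      simp
    have hsplit : (∫ t in (0:ℝ)..1, (Real.pi - (myf ξ t).im))
        = (∫ t in (0:ℝ)..a, (Real.pi - (myf ξ t).im))
          + ∫ t in a..(1:ℝ), (Real.pi - (myf ξ t).im) :=
      (intervalIntegral.integral_add_adjacent_intervals (hintg 0 a) (hintg a 1)).symm
    have htail : (0:ℝ) ≤ ∫ t in a..(1:ℝ), (Real.pi - (myf ξ t).im) :=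
      intervalIntegral.integral_nonneg ha1.le (fun u _ => by linarith [hg0 u])
    have hga : (∫ t in (0:ℝ)..a, (Real.pi - (myf ξ t).im)) ≤ Real.pi := by
      rw [hg1] at hsplit; linarith
    have heq : (∫ t in (0:ℝ)..a, (Real.pi - (myf ξ t).im))
        = Real.pi * a - ∫ t in (0:ℝ)..a, (myf ξ t).im := by
      rw [intervalIntegral.integral_sub intervalIntegrable_const (hintim 0 a)]
      simp [mul_comm]
    have him : ∫ t in (0:ℝ)..a, (myf ξ t).im = (∫ t in (0:ℝ)..a, myf ξ t).im := by
      simpa using Complex.imCLM.intervalIntegral_comp_comm (hintf 0 a)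
    rw [← him]
    linarith [hga, heq.symm.le]
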